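/- arXiv:2009.10574 — 2 statements merged into one kernel-verified Lean document; each statement's English description precedes it below -/
import Mathlib

section
/- Let G be a finite simple graph and let dist denote the shortest-path distance in G (with dist(a,b) = ∞ if a and b are in different connected components). For any two vertices a₁, a₂ and any natural number r, the subgraph of G induced on the union of the r-balls around a₁ and a₂ is connected if and only if dist(a₁, a₂) ≤ 2r + 1. -/
open SimpleGraph

/-- A walk whose support lies in `s` yields reachability in the induced graph. -/
lemma reachable_induce_of_walk {V : Type*} {G : SimpleGraph V} {s : Set V} :
    ∀ {u v : V} (p : G.Walk u v), (∀ x ∈ p.support, x ∈ s) →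
      ∀ (hu : u ∈ s) (hv : v ∈ s), (G.induce s).Reachable ⟨u, hu⟩ ⟨v, hv⟩ := by
  intro u v p
  induction p with
  | nil => intro _ hu hv; exact Reachable.refl _
  | @cons u' w v' h q ih =>
    intro hp hu hv
    have hw : w ∈ s := hp w (by simp)
    exact Reachable.trans
      ((by simpa using h : (G.induce s).Adj ⟨u', hu⟩ ⟨w, hw⟩).reachable)
      (ih (fun x hx => hp x (by simp [hx])) hw hv)

/-- Along a walk that stays in the union of two balls, starting within `r` of `a₁`
and ending within `r` of `a₂`, the centers are within `2r+1` of each other. -/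
lemma aux_edist_le {V : Type*} {G : SimpleGraph V} {a₁ a₂ : V} {r : ℕ} :
    ∀ {u v : V} (p : G.Walk u v),
      (∀ x ∈ p.support, G.edist a₁ x ≤ r ∨ G.edist a₂ x ≤ r) →
      G.edist a₁ u ≤ r → G.edist a₂ v ≤ r → G.edist a₁ a₂ ≤ 2 * r + 1 := by
  intro u v p
  induction p with
  | nil =>
    rename_i u
    intro _ hu hv
    calc G.edist a₁ a₂ ≤ G.edist a₁ u + G.edist u a₂ := SimpleGraph.edist_triangle
      _ ≤ (r : ℕ∞) + (r : ℕ∞) := add_le_add hu (SimpleGraph.edist_comm ▸ hv)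
      _ ≤ 2 * r + 1 := by
        rw [two_mul]; exact le_trans (le_refl _) (le_add_right (le_refl _))
  | @cons u' w v' h q ih =>
    intro hp hu hv
    rcases hp w (by simp) with hw | hw
    · exact ih (fun x hx => hp x (by simp [hx])) hw hv
    · calc G.edist a₁ a₂ ≤ G.edist a₁ w + G.edist w a₂ := SimpleGraph.edist_triangle
        _ ≤ (G.edist a₁ u' + G.edist u' w) + G.edist w a₂ :=
            add_le_add SimpleGraph.edist_triangle le_rfl
        _ ≤ ((r : ℕ∞) + 1) + (r : ℕ∞) := by
            refine add_le_add (add_le_add hu (SimpleGraph.edist_le h.toWalk)) ?_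
            rw [SimpleGraph.edist_comm]; exact hw
        _ = 2 * r + 1 := by rw [two_mul]; ring

/-- For a finite simple graph `G` and vertices `a₁, a₂`, the subgraph
induced on the union of the `r`-balls around `a₁` and `a₂` is connected iff
`dist(a₁, a₂) ≤ 2r + 1` (distance measured in `ℕ∞`, infinite across components). -/
theorem induced_union_balls_connected_iff {V : Type*} [Fintype V]
    (G : SimpleGraph V) (a₁ a₂ : V) (r : ℕ) :
    (G.induce {b : V | G.edist a₁ b ≤ r ∨ G.edist a₂ b ≤ r}).Connected ↔
      G.edist a₁ a₂ ≤ 2 * r + 1 := by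
  classical
  set s : Set V := {b : V | G.edist a₁ b ≤ r ∨ G.edist a₂ b ≤ r} with hs
  have ha₁ : a₁ ∈ s := Or.inl (by simp [SimpleGraph.edist_self])
  have ha₂ : a₂ ∈ s := Or.inr (by simp [SimpleGraph.edist_self])
  constructor
  · -- connected → edist ≤ 2r+1
    intro hconn
    obtain ⟨q⟩ := hconn ⟨a₁, ha₁⟩ ⟨a₂, ha₂⟩
    let f : G.induce s ↪g G := SimpleGraph.Embedding.induce s
    have hsup : ∀ x ∈ (q.map f.toHom).support, G.edist a₁ x ≤ r ∨ G.edist a₂ x ≤ r := by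
      intro x hx
      rw [SimpleGraph.Walk.support_map, List.mem_map] at hx
      obtain ⟨y, _, rfl⟩ := hx
      exact y.2
    exact aux_edist_le (q.map f.toHom) hsup
      (by simp [f, SimpleGraph.Embedding.induce, SimpleGraph.edist_self])
      (by simp [f, SimpleGraph.Embedding.induce, SimpleGraph.edist_self])
  · -- edist ≤ 2r+1 → connected
    intro hd
    have h2top : (2 * (r : ℕ∞) + 1) ≠ ⊤ := by
      rw [show (2 * (r : ℕ∞) + 1) = ((2 * r + 1 : ℕ) : ℕ∞) by push_cast; ring]
      exact ENat.coe_ne_top _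
    have hne : G.edist a₁ a₂ ≠ ⊤ := fun h => h2top (top_le_iff.mp (h ▸ hd))
    obtain ⟨p, hp⟩ := SimpleGraph.exists_walk_of_edist_ne_top hne
    have hplen : (p.length : ℕ∞) ≤ 2 * r + 1 := hp ▸ hd
    have hplen' : p.length ≤ 2 * r + 1 := by exact_mod_cast hplen
    -- every vertex of p is in s
    have hpsup : ∀ x ∈ p.support, x ∈ s := by
      intro x hx
      have hspec := p.take_spec hx
      have hlen : (p.takeUntil x hx).length + (p.dropUntil x hx).length = p.length := by
        rw [← SimpleGraph.Walk.length_append, hspec]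
      rcases (by omega : (p.takeUntil x hx).length ≤ r ∨ (p.dropUntil x hx).length ≤ r)
        with h | h
      · exact Or.inl <| (SimpleGraph.edist_le _).trans (by exact_mod_cast h)
      · refine Or.inr ?_
        rw [SimpleGraph.edist_comm]
        exact (SimpleGraph.edist_le (p.dropUntil x hx)).trans (by exact_mod_cast h)
    have hmid : (G.induce s).Reachable ⟨a₁, ha₁⟩ ⟨a₂, ha₂⟩ :=
      reachable_induce_of_walk p hpsup ha₁ ha₂
    -- reachability within a ball
    have key : ∀ (a b : V), G.edist a b ≤ r → (∀ x, G.edist a x ≤ r → x ∈ s) →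
        ∀ (ha : a ∈ s) (hb : b ∈ s), (G.induce s).Reachable ⟨a, ha⟩ ⟨b, hb⟩ := by
      intro a b hab hball ha hb
      have hne' : G.edist a b ≠ ⊤ := fun h => by
        rw [h] at hab; exact ENat.coe_ne_top r (top_le_iff.mp hab)
      obtain ⟨q, hq⟩ := SimpleGraph.exists_walk_of_edist_ne_top hne'
      have hqlen : (q.length : ℕ∞) ≤ r := hq ▸ hab
      refine reachable_induce_of_walk q (fun x hx => hball x ?_) ha hb
      calc G.edist a x ≤ ((q.takeUntil x hx).length : ℕ∞) := SimpleGraph.edist_le _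
        _ ≤ (q.length : ℕ∞) := by exact_mod_cast q.length_takeUntil_le hx
        _ ≤ r := hqlen
    rw [SimpleGraph.connected_iff]
    refine ⟨?_, ⟨⟨a₁, ha₁⟩⟩⟩
    rintro ⟨b, hb⟩ ⟨c, hc⟩
    have hrb : (G.induce s).Reachable ⟨b, hb⟩ ⟨a₁, ha₁⟩ ∨
        (G.induce s).Reachable ⟨b, hb⟩ ⟨a₂, ha₂⟩ := by
      rcases id hb with h | h
      · exact Or.inl (key a₁ b h (fun x hx => Or.inl hx) ha₁ hb).symm
      · exact Or.inr (key a₂ b h (fun x hx => Or.inr hx) ha₂ hb).symm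
    have hrc : (G.induce s).Reachable ⟨a₁, ha₁⟩ ⟨c, hc⟩ ∨
        (G.induce s).Reachable ⟨a₂, ha₂⟩ ⟨c, hc⟩ := by
      rcases id hc with h | h
      · exact Or.inl (key a₁ c h (fun x hx => Or.inl hx) ha₁ hc)
      · exact Or.inr (key a₂ c h (fun x hx => Or.inr hx) ha₂ hc)
    rcases hrb with hb' | hb' <;> rcases hrc with hc' | hc'
    · exact hb'.trans hc'
    · exact hb'.trans (hmid.trans hc')
    · exact hb'.trans (hmid.symm.trans hc')
    · exact hb'.trans hc'
end

section
/- Let G be a finite simple graph, r ∈ ℕ, k ≥ 1, and let a₁, …, a_k be vertices of G. If the subgraph of G induced on the union of the r-balls N_r(a₁) ∪ ⋯ ∪ N_r(a_k) is connected, then this union is contained in the (r + (k−1)(2r+1))-ball around a_i, for every i ∈ {1, …, k}. -/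
private lemma walk_edist_bound {V : Type*} (G : SimpleGraph V) (r k : ℕ)
    (a : Fin k → V) (H : SimpleGraph (Fin k))
    (hH : ∀ i j, H.Adj i j → G.edist (a i) (a j) ≤ (2 * r + 1 : ℕ))
    {i j : Fin k} (w : H.Walk i j) :
    G.edist (a i) (a j) ≤ (w.length : ℕ∞) * ((2 * r + 1 : ℕ) : ℕ∞) := by
  induction w with
  | nil => simp [SimpleGraph.edist_self]
  | cons h p ih =>
    calc G.edist (a _) (a _) ≤ G.edist (a _) (a _) + G.edist (a _) (a _) :=
          SimpleGraph.edist_triangle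
      _ ≤ ((2 * r + 1 : ℕ) : ℕ∞) + (p.length : ℕ∞) * ((2 * r + 1 : ℕ) : ℕ∞) :=
          add_le_add (hH _ _ h) ih
      _ = _ := by push_cast [SimpleGraph.Walk.length_cons]; ring

/-- If the subgraph induced on the union of the `r`-balls around
`a₁, …, a_k` (with `k ≥ 1`) is connected, then this union is contained in the
`(r + (k-1)(2r+1))`-ball around each `a i`. -/
theorem union_balls_subset_of_induced_connected {V : Type*} [Fintype V]
    (G : SimpleGraph V) (r k : ℕ) (hk : 1 ≤ k) (a : Fin k → V)
    (hconn : (G.induce {b : V | ∃ i : Fin k, G.edist (a i) b ≤ r}).Connected) :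
    ∀ i : Fin k,
      {b : V | ∃ j : Fin k, G.edist (a j) b ≤ r} ⊆
        {b : V | G.edist (a i) b ≤ (r + (k - 1) * (2 * r + 1) : ℕ)} := by
  set S : Set V := {b : V | ∃ i : Fin k, G.edist (a i) b ≤ r} with hS
  -- auxiliary graph on centers
  set H : SimpleGraph (Fin k) :=
    { Adj := fun i j => i ≠ j ∧ G.edist (a i) (a j) ≤ (2 * r + 1 : ℕ)
      symm := ⟨by
        rintro i j ⟨hne, hle⟩
        exact ⟨hne.symm, by rwa [SimpleGraph.edist_comm]⟩⟩
      loopless := ⟨fun i h => h.1 rfl⟩ } with hHdef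
  have hHadj : ∀ i j, H.Adj i j → G.edist (a i) (a j) ≤ (2 * r + 1 : ℕ) :=
    fun i j h => h.2
  have hreach_of_close : ∀ i j : Fin k,
      G.edist (a i) (a j) ≤ (2 * r + 1 : ℕ) → H.Reachable i j := by
    intro i j hle
    by_cases hij : i = j
    · exact hij ▸ SimpleGraph.Reachable.refl i
    · exact (SimpleGraph.Adj.reachable ⟨hij, hle⟩)
  -- every center reachable from every center in H
  have key : ∀ i j : Fin k, H.Reachable i j := by
    intro i j
    have hi : (a i) ∈ S := ⟨i, by simp [SimpleGraph.edist_self]⟩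
    have hj : (a j) ∈ S := ⟨j, by simp [SimpleGraph.edist_self]⟩
    obtain ⟨w⟩ := hconn.preconnected ⟨a i, hi⟩ ⟨a j, hj⟩
    -- induct along w : claim for all x, walk x → a j, all centers near x reach j
    have claim : ∀ (x y : S) (w : (G.induce S).Walk x y)
        (i' j' : Fin k), G.edist (a i') (x : V) ≤ r →
        G.edist (a j') (y : V) ≤ r → H.Reachable i' j' := by
      intro x y w
      induction w with
      | nil =>
        intro i' j' hle hle'
        refine hreach_of_close i' j' ?_
        calc G.edist (a i') (a j')
            ≤ G.edist (a i') (_ : V) + G.edist (_ : V) (a j') :=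
              SimpleGraph.edist_triangle
          _ ≤ (r : ℕ∞) + (r : ℕ∞) :=
              add_le_add hle (by rwa [SimpleGraph.edist_comm])
          _ ≤ ((2 * r + 1 : ℕ) : ℕ∞) := by
              push_cast
              exact le_trans (by norm_num [two_mul]) le_self_add
      | @cons x y _ hadj p ih =>
        intro i' j'' hle hle'
        obtain ⟨j', hj'⟩ := y.2
        have hadj' : G.Adj (x : V) (y : V) := hadj
        have h1 : G.edist (a i') (a j') ≤ (2 * r + 1 : ℕ) := by
          calc G.edist (a i') (a j')
              ≤ G.edist (a i') (x : V) + G.edist (x : V) (a j') :=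
                SimpleGraph.edist_triangle
            _ ≤ G.edist (a i') (x : V) +
                  (G.edist (x : V) (y : V) + G.edist (y : V) (a j')) :=
                add_le_add_right SimpleGraph.edist_triangle _
            _ ≤ (r : ℕ∞) + (1 + (r : ℕ∞)) := by
                refine add_le_add hle (add_le_add ?_ ?_)
                · exact le_of_eq (SimpleGraph.edist_eq_one_iff_adj.mpr hadj')
                · rwa [SimpleGraph.edist_comm]
            _ = ((2 * r + 1 : ℕ) : ℕ∞) := by push_cast; ring
        exact (hreach_of_close i' j' h1).trans (ih j' j'' hj' hle')
    exact claim ⟨a i, hi⟩ ⟨a j, hj⟩ w i j (by simp [SimpleGraph.edist_self])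
      (by simp [SimpleGraph.edist_self])
  intro i b hb
  obtain ⟨j, hjb⟩ := hb
  obtain ⟨w, hw⟩ := (key i j).exists_path_of_dist
  have hlen : w.length ≤ k - 1 := by
    have := hw.1.length_lt
    simp only [Fintype.card_fin] at this
    omega
  have h1 : G.edist (a i) (a j) ≤ ((k - 1 : ℕ) : ℕ∞) * ((2 * r + 1 : ℕ) : ℕ∞) := by
    refine le_trans (walk_edist_bound G r k a H hHadj w) ?_
    exact mul_le_mul_left (by exact_mod_cast hlen) _
  calc G.edist (a i) b ≤ G.edist (a i) (a j) + G.edist (a j) b :=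
        SimpleGraph.edist_triangle
    _ ≤ ((k - 1 : ℕ) : ℕ∞) * ((2 * r + 1 : ℕ) : ℕ∞) + (r : ℕ∞) :=
        add_le_add h1 hjb
    _ = ((r + (k - 1) * (2 * r + 1) : ℕ) : ℕ∞) := by push_cast; ring
end
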